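/- Let X be a real Banach space, p : X → ]−∞,∞] a proper convex function, s : X → ]−∞,∞] lower semicontinuous with s ≤ p on X and s(0) > 0. Then there exists x* ∈ X* with p*(x*) ≤ 0, where p*(x*) = sup_{x ∈ X} [⟨x, x*⟩ − p(x)] is the Fenchel conjugate. -/

import Mathlib

private lemma sep_epi {X : Type*} [NormedAddCommGroup X] [NormedSpace ℝ X]
    (p : X → EReal) (hpbot : ∀ x, p x ≠ ⊥)
    (hconv : ∀ x y : X, ∀ a b : ℝ, 0 ≤ a → 0 ≤ b → a + b = 1 →
      p (a • x + b • y) ≤ (a : EReal) * p x + (b : EReal) * p y)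
    (x₀ : X) (t₀ : ℝ) (h₀ : p x₀ ≤ (t₀ : EReal))
    (z : X) (m : ℝ)
    (hz : (z, m) ∉ closure {q : X × ℝ | p q.1 ≤ (q.2 : EReal)}) :
    ∃ (F : X →L[ℝ] ℝ) (c u : ℝ), 0 ≤ c ∧ F z + m * c < u ∧
      ∀ y : X, ∀ v : ℝ, p y ≤ (v : EReal) → u < F y + v * c := by
  set E : Set (X × ℝ) := {q : X × ℝ | p q.1 ≤ (q.2 : EReal)} with hE
  have hreal : ∀ (y : X) (r : ℝ), p y ≤ (r : EReal) → ∃ v : ℝ, p y = (v : EReal) ∧ v ≤ r := by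
    intro y r h
    have hne : p y ≠ ⊤ := fun htop => by
      rw [htop] at h
      exact absurd h (not_le.2 (EReal.coe_lt_top r))
    refine ⟨(p y).toReal, (EReal.coe_toReal hne (hpbot y)).symm, ?_⟩
    rw [← EReal.coe_toReal hne (hpbot y)] at h
    exact_mod_cast h
  have hEconv : Convex ℝ E := by
    rintro ⟨y, r⟩ hy ⟨y', r'⟩ hy' a b ha hb hab
    obtain ⟨v, hv, hvr⟩ := hreal y r hy
    obtain ⟨v', hv', hvr'⟩ := hreal y' r' hy'
    have key := hconv y y' a b ha hb hab
    have : p (a • y + b • y') ≤ ((a * r + b * r' : ℝ) : EReal) := by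
      refine key.trans ?_
      rw [hv, hv', ← EReal.coe_mul, ← EReal.coe_mul, ← EReal.coe_add]
      exact EReal.coe_le_coe_iff.2 (by nlinarith)
    simpa [E, smul_eq_mul] using this
  have hclosed : Convex ℝ (closure E) := hEconv.closure
  obtain ⟨f, u, hzu, hfE⟩ := geometric_hahn_banach_point_closed hclosed isClosed_closure hz
  set F : X →L[ℝ] ℝ := f.comp (ContinuousLinearMap.inl ℝ X ℝ) with hF
  set c : ℝ := f (0, 1) with hc
  have hf : ∀ (y : X) (r : ℝ), f (y, r) = F y + r * c := by
    intro y r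
    have h1 : (y, r) = (y, (0 : ℝ)) + r • ((0 : X), (1 : ℝ)) := by
      simp [Prod.ext_iff]
    rw [h1, map_add, map_smul]
    simp [F, c, smul_eq_mul]
  have hmem : ∀ (y : X) (v : ℝ), p y ≤ (v : EReal) → u < F y + v * c := by
    intro y v h
    have : (y, v) ∈ E := h
    have := hfE _ (subset_closure this)
    rwa [hf] at this
  have hc0 : 0 ≤ c := by
    by_contra hcneg
    push_neg at hcneg
    set r : ℝ := max t₀ ((u - F x₀ - 1) / c) with hr
    have h1 : u < F x₀ + r * c := hmem x₀ r (h₀.trans (EReal.coe_le_coe_iff.2 (le_max_left _ _)))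
    have h2 : r * c ≤ ((u - F x₀ - 1) / c) * c :=
      mul_le_mul_of_nonpos_right (le_max_right _ _) hcneg.le
    rw [div_mul_cancel₀ _ (ne_of_lt hcneg)] at h2
    linarith
  refine ⟨F, c, u, hc0, ?_, hmem⟩
  rw [← hf]
  exact hzu

theorem stmt1 {X : Type*} [NormedAddCommGroup X] [NormedSpace ℝ X] [CompleteSpace X]
    [Nontrivial X]
    (p s : X → EReal)
    (hpbot : ∀ x, p x ≠ ⊥) (hsbot : ∀ x, s x ≠ ⊥)
    (hproper : ∃ x, p x ≠ ⊤)
    (hconv : ∀ x y : X, ∀ a b : ℝ, 0 ≤ a → 0 ≤ b → a + b = 1 →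
      p (a • x + b • y) ≤ (a : EReal) * p x + (b : EReal) * p y)
    (hlsc : LowerSemicontinuous s)
    (hsle : ∀ x, s x ≤ p x)
    (hs0 : 0 < s 0) :
    ∃ x' : StrongDual ℝ X, (⨆ x : X, (((x' x : ℝ) : EReal) - p x)) ≤ 0 := by
  classical
  set E : Set (X × ℝ) := {q : X × ℝ | p q.1 ≤ (q.2 : EReal)} with hE
  -- a good point of the epigraph
  obtain ⟨x₀, hx₀⟩ := hproper
  set t₀ : ℝ := (p x₀).toReal with ht₀
  have hpx₀ : p x₀ = (t₀ : EReal) := (EReal.coe_toReal hx₀ (hpbot x₀)).symm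
  -- generic fact: if s y > θ on a nbhd of z and m < θ then (z, m) ∉ closure E
  have hnotmem : ∀ (z : X) (m θ : ℝ), m < θ → (θ : EReal) < s z → (z, m) ∉ closure E := by
    intro z m θ hmθ hθ hmem
    have hU : ∀ᶠ x in nhds z, (θ : EReal) < s x := hlsc z _ hθ
    rw [mem_closure_iff_nhds] at hmem
    obtain ⟨⟨y, r⟩, ⟨hyU, hrI⟩, hepi⟩ :=
      hmem ({x | (θ : EReal) < s x} ×ˢ Set.Iio θ) (prod_mem_nhds hU (Iio_mem_nhds hmθ))
    have h1 : (θ : EReal) < (r : EReal) := lt_of_lt_of_le hyU ((hsle y).trans hepi)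
    have h2 : r < θ := hrI
    exact absurd (EReal.coe_lt_coe_iff.1 h1) (not_lt.2 h2.le)
  -- (0,0) ∉ closure E
  obtain ⟨ε', hε1, hε2⟩ := exists_between hs0
  have hε'top : ε' ≠ ⊤ := fun h => by rw [h] at hε2; exact absurd hε2 (by simp)
  have hε'bot : ε' ≠ ⊥ := fun h => by rw [h] at hε1; exact absurd hε1 (by simp)
  set ε : ℝ := ε'.toReal with hεdef
  have hεcoe : (ε : EReal) = ε' := EReal.coe_toReal hε'top hε'bot
  have hεpos : (0 : ℝ) < ε := by
    have : ((0 : ℝ) : EReal) < (ε : EReal) := by rw [hεcoe]; exact_mod_cast hε1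
    exact_mod_cast this
  have hzero : ((0 : X), (0 : ℝ)) ∉ closure E :=
    hnotmem 0 0 ε hεpos (by rw [hεcoe]; exact hε2)
  obtain ⟨F, c, u, hc0, h0u, hmemF⟩ :=
    sep_epi p hpbot hconv x₀ t₀ hpx₀.le 0 0 hzero
  have hupos : 0 < u := by simpa using h0u
  rcases lt_or_eq_of_le hc0 with hcpos | hczero
  · -- c > 0 : take x' = -(1/c) • F
    refine ⟨(-c⁻¹) • F, iSup_le fun y => ?_⟩
    by_cases hy : p y = ⊤
    · rw [hy, EReal.sub_top]; exact bot_le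
    · set v : ℝ := (p y).toReal with hv
      have hpy : p y = (v : EReal) := (EReal.coe_toReal hy (hpbot y)).symm
      have hlt := hmemF y v hpy.le
      have hle : ((-c⁻¹) • F) y ≤ v := by
        have hval : ((-c⁻¹) • F) y = -(F y / c) := by
          simp [smul_eq_mul]; ring
        rw [hval, neg_le, le_div_iff₀ hcpos]
        nlinarith
      rw [hpy, ← EReal.coe_sub]
      exact_mod_cast sub_nonpos.2 hle
  · -- c = 0 : F y > u > 0 on dom p
    subst hczero
    have hdom : ∀ (y : X) (v : ℝ), p y ≤ (v : EReal) → u < F y := by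
      intro y v h
      simpa using hmemF y v h
    -- s x₀ is real
    have hsx₀top : s x₀ ≠ ⊤ := fun h => by
      have := (hsle x₀).trans_eq hpx₀
      rw [h] at this
      exact absurd this (by simp)
    set w : ℝ := (s x₀).toReal with hw
    have hsx₀ : s x₀ = (w : EReal) := (EReal.coe_toReal hsx₀top (hsbot x₀)).symm
    have hwt₀ : w ≤ t₀ := by
      have := (hsle x₀).trans_eq hpx₀
      rw [hsx₀] at this
      exact_mod_cast this
    have hnot2 : (x₀, w - 1) ∉ closure E := by
      refine hnotmem x₀ (w - 1) (w - 1/2) (by linarith) ?_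
      rw [hsx₀]
      exact_mod_cast (by linarith : w - 1/2 < w)
    obtain ⟨G, d, u₂, hd0, hlt2, hmemG⟩ :=
      sep_epi p hpbot hconv x₀ t₀ hpx₀.le x₀ (w - 1) hnot2
    have hdt₀ := hmemG x₀ t₀ hpx₀.le
    have hdpos : 0 < d := by
      rcases lt_or_eq_of_le hd0 with h | h
      · exact h
      · exfalso; rw [← h] at hlt2 hdt₀; simp at hlt2 hdt₀; linarith
    -- affine minorant: for p y = v, -(1/d) * G y + u₂/d < v
    set γ : ℝ := u₂ / d with hγ
    refine ⟨(-d⁻¹) • G - (|γ| / u) • F, iSup_le fun y => ?_⟩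
    by_cases hy : p y = ⊤
    · rw [hy, EReal.sub_top]; exact bot_le
    · set v : ℝ := (p y).toReal with hv
      have hpy : p y = (v : EReal) := (EReal.coe_toReal hy (hpbot y)).symm
      have hG := hmemG y v hpy.le
      have hFy : u < F y := hdom y v hpy.le
      have hval : ((-d⁻¹) • G - (|γ| / u) • F) y = -d⁻¹ * G y - (|γ| / u) * F y := by
        simp only [ContinuousLinearMap.sub_apply, ContinuousLinearMap.smul_apply,
          ContinuousLinearMap.neg_apply, smul_eq_mul]
        try ring
      have hminor : -d⁻¹ * G y + γ < v := by
        have h1 : (u₂ - G y) / d < v := (div_lt_iff₀ hdpos).2 (by linarith)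
        have h2 : -d⁻¹ * G y + u₂ / d = (u₂ - G y) / d := by
          field_simp
          ring
        rw [hγ, h2]
        exact h1
      have hcoef : |γ| ≤ (|γ| / u) * F y := by
        have h1 : (|γ| / u) * u ≤ (|γ| / u) * F y :=
          mul_le_mul_of_nonneg_left hFy.le (div_nonneg (abs_nonneg γ) hupos.le)
        rwa [div_mul_cancel₀ _ (ne_of_gt hupos)] at h1
      have hle : ((-d⁻¹) • G - (|γ| / u) • F) y ≤ v := by
        rw [hval]
        have := neg_abs_le γ
        linarith
      rw [hpy, ← EReal.coe_sub]
      exact_mod_cast sub_nonpos.2 hle
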